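/- For every dimension d ≥ 2, there does not exist a unitary U ∈ SU(d) and a nonzero vector ψ ∈ ℂ^d such that V·U·ψ = U·Vᵀ·ψ for all V ∈ SU(d), where Vᵀ denotes the transpose of V. -/
import Mathlib

open Matrix

/-- The set of special unitary `d × d` complex matrices. -/
def SU (d : ℕ) : Set (Matrix (Fin d) (Fin d) ℂ) :=
  {V | V ∈ Matrix.unitaryGroup (Fin d) ℂ ∧ V.det = 1}

namespace NTI

variable {d : ℕ}

def Dvec (i j : Fin d) (c c' : ℂ) : Fin d → ℂ :=
  fun k => if k = i then c else if k = j then c' else 1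

def Dmat (i j : Fin d) (c c' : ℂ) : Matrix (Fin d) (Fin d) ℂ :=
  diagonal (Dvec i j c c')

def Smat (i j : Fin d) (a b : ℂ) : Matrix (Fin d) (Fin d) ℂ :=
  Matrix.of fun k l =>
    if k = i then (if l = j then a else 0)
    else if k = j then (if l = i then b else 0)
    else (if l = k then 1 else 0)

variable {i j : Fin d} (hij : i ≠ j)

lemma Smat_apply (a b : ℂ) (k l : Fin d) : Smat i j a b k l =
    (if k = i then (if l = j then a else 0)
    else if k = j then (if l = i then b else 0)
    else (if l = k then 1 else 0)) := rfl

lemma Smat_row_i (a b : ℂ) (m : Fin d) : Smat i j a b i m = if m = j then a else 0 := by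
  simp [Smat_apply]

include hij in
lemma Smat_row_j (a b : ℂ) (m : Fin d) : Smat i j a b j m = if m = i then b else 0 := by
  simp [Smat_apply, hij.symm]

lemma Smat_row_other (a b : ℂ) {k : Fin d} (hki : k ≠ i) (hkj : k ≠ j) (m : Fin d) :
    Smat i j a b k m = if m = k then 1 else 0 := by
  simp [Smat_apply, hki, hkj]

lemma Dmat_apply (c c' : ℂ) (k l : Fin d) : Dmat i j c c' k l =
    if k = l then (if k = i then c else if k = j then c' else 1) else 0 := by
  simp [Dmat, Dvec, diagonal_apply]

include hij in
lemma Smat_mulVec (a b : ℂ) (x : Fin d → ℂ) :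
    Smat i j a b *ᵥ x = fun k =>
      if k = i then a * x j else if k = j then b * x i else x k := by
  funext k
  rcases eq_or_ne k i with rfl | hki
  · simp only [mulVec, dotProduct, Smat_row_i, if_pos rfl, ite_mul, zero_mul,
      Finset.sum_ite_eq', Finset.mem_univ, if_true]
  · rcases eq_or_ne k j with rfl | hkj
    · simp only [mulVec, dotProduct, Smat_row_j hij, if_neg hki, if_pos rfl, ite_mul, zero_mul,
        Finset.sum_ite_eq', Finset.mem_univ, if_true]
    · simp only [mulVec, dotProduct, Smat_row_other a b hki hkj, if_neg hki, if_neg hkj,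
        ite_mul, zero_mul, one_mul, Finset.sum_ite_eq', Finset.mem_univ, if_true]

include hij in
lemma Smat_transpose (a b : ℂ) : (Smat i j a b)ᵀ = Smat i j b a := by
  ext k l
  simp only [transpose_apply, Smat_apply]
  by_cases hki : k = i <;> by_cases hkj : k = j <;> by_cases hli : l = i <;> by_cases hlj : l = j <;>
    simp_all [eq_comm]

include hij in
lemma Smat_conjTranspose (a b : ℂ) : (Smat i j a b)ᴴ = Smat i j (star b) (star a) := by
  ext k l
  simp only [conjTranspose_apply, Smat_apply]
  by_cases hki : k = i <;> by_cases hkj : k = j <;> by_cases hli : l = i <;> by_cases hlj : l = j <;>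
    simp_all [eq_comm]

include hij in
lemma Smat_mul_Smat (a b c e : ℂ) :
    Smat i j a b * Smat i j c e = Dmat i j (a * e) (b * c) := by
  ext k l
  rw [mul_apply, Dmat_apply]
  rcases eq_or_ne k i with rfl | hki
  · simp only [Smat_row_i, ite_mul, zero_mul, Finset.sum_ite_eq', Finset.mem_univ, if_true,
      Smat_row_j hij, if_pos rfl]
    by_cases hl : l = k
    · simp [hl]
    · simp [hl, Ne.symm hl]
  · rcases eq_or_ne k j with rfl | hkj
    · simp only [Smat_row_j hij, ite_mul, zero_mul, Finset.sum_ite_eq', Finset.mem_univ, if_true,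
        Smat_row_i, if_neg hki, if_pos rfl]
      by_cases hl : l = k
      · simp [hl]
      · simp [hl, Ne.symm hl]
    · simp only [Smat_row_other a b hki hkj, ite_mul, zero_mul, one_mul,
        Finset.sum_ite_eq', Finset.mem_univ, if_true,
        Smat_row_other c e hki hkj, if_neg hki, if_neg hkj]
      by_cases hl : l = k
      · simp [hl]
      · simp [hl, Ne.symm hl]

omit hij in
lemma Dmat_one : Dmat i j 1 1 = (1 : Matrix (Fin d) (Fin d) ℂ) := by
  ext k l
  rw [Dmat_apply, one_apply]
  split_ifs <;> rfl

include hij in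
lemma det_Dmat (c c' : ℂ) : (Dmat i j c c').det = c * c' := by
  rw [Dmat, det_diagonal]
  rw [← Finset.mul_prod_erase Finset.univ _ (Finset.mem_univ i)]
  rw [← Finset.mul_prod_erase _ _ (Finset.mem_erase.mpr ⟨hij.symm, Finset.mem_univ j⟩)]
  rw [Finset.prod_eq_one]
  · simp [Dvec, hij.symm]
  · intro m hm
    simp only [Finset.mem_erase] at hm
    simp [Dvec, hm.1, hm.2.1]

include hij in
lemma Smat_eq (a b : ℂ) :
    Smat i j a b = (Equiv.swap i j).permMatrix ℂ * Dmat i j b a := by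
  ext k l
  rw [Dmat, mul_diagonal]
  simp only [Equiv.Perm.permMatrix, PEquiv.toMatrix_apply, Equiv.toPEquiv_apply, Option.mem_def,
    Option.some_inj, Smat_apply, Dvec]
  by_cases hki : k = i <;> by_cases hkj : k = j <;> by_cases hli : l = i <;> by_cases hlj : l = j <;>
    simp_all [Equiv.swap_apply_def, eq_comm]

include hij in
lemma det_Smat (a b : ℂ) : (Smat i j a b).det = -(a * b) := by
  rw [Smat_eq hij, det_mul, det_permutation, Equiv.Perm.sign_swap hij, det_Dmat hij]
  push_cast
  ring

include hij in
lemma Dmat_mem_SU (c c' : ℂ) (hc : star c * c = 1) (hc' : star c' * c' = 1) (h1 : c * c' = 1) :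
    Dmat i j c c' ∈ SU d := by
  constructor
  · rw [Matrix.mem_unitaryGroup_iff']
    rw [Matrix.star_eq_conjTranspose, Dmat, diagonal_conjTranspose, diagonal_mul_diagonal]
    have hv : star (Dvec i j c c') * Dvec i j c c' = 1 := by
      funext m
      simp only [Pi.mul_apply, Pi.star_apply, Pi.one_apply, Dvec]
      split_ifs <;> simp_all
    rw [show (fun k => star (Dvec i j c c') k * Dvec i j c c' k) = star (Dvec i j c c') * Dvec i j c c' from rfl, hv]
    exact diagonal_one
  · rw [det_Dmat hij, h1]

include hij in
lemma Smat_mem_SU (a b : ℂ) (ha : star a * a = 1) (hb : star b * b = 1) (h1 : -(a * b) = 1) :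
    Smat i j a b ∈ SU d := by
  constructor
  · rw [Matrix.mem_unitaryGroup_iff']
    rw [Matrix.star_eq_conjTranspose, Smat_conjTranspose hij, Smat_mul_Smat hij, hb, ha,
      Dmat_one]
  · rw [det_Smat hij, h1]

include hij in
lemma mulVec_ite (U : Matrix (Fin d) (Fin d) ℂ) (x : Fin d → ℂ) (p q : ℂ) (k : Fin d) :
    (U *ᵥ fun m => if m = i then p else if m = j then q else x m) k
      = (U *ᵥ x) k + (p - x i) * U k i + (q - x j) * U k j := by
  have hfun : (fun m => if m = i then p else if m = j then q else x m)
      = x + (p - x i) • (Pi.single i 1 : Fin d → ℂ) + (q - x j) • (Pi.single j 1 : Fin d → ℂ) := by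
    funext m
    rcases eq_or_ne m i with rfl | hmi
    · simp [Pi.single_apply, hij]
    · rcases eq_or_ne m j with rfl | hmj
      · simp [Pi.single_apply, hij.symm, hmi]
      · simp [Pi.single_apply, hmi, hmj]
  rw [hfun, mulVec_add, mulVec_add, mulVec_smul, mulVec_smul]
  simp [mulVec_single]

end NTI

open NTI

/-- For every dimension `d ≥ 2`, there is no `U ∈ SU(d)` and nonzero `ψ ∈ ℂ^d` with
`V • U • ψ = U • Vᵀ • ψ` for all `V ∈ SU(d)`. -/
theorem no_transpose_intertwiner (d : ℕ) (hd : 2 ≤ d) :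
    ¬ ∃ (U : Matrix (Fin d) (Fin d) ℂ) (ψ : Fin d → ℂ), U ∈ SU d ∧ ψ ≠ 0 ∧
      ∀ V ∈ SU d, (V * U) *ᵥ ψ = (U * Vᵀ) *ᵥ ψ := by
  rintro ⟨U, ψ, ⟨hUu, hUdet⟩, hψ, H⟩
  set φ := U *ᵥ ψ with hφdef
  have base : ∀ V ∈ SU d, V *ᵥ φ = U *ᵥ (Vᵀ *ᵥ ψ) := by
    intro V hV
    rw [hφdef, mulVec_mulVec, mulVec_mulVec]
    exact H V hV
  obtain ⟨i, hψi⟩ : ∃ i, ψ i ≠ 0 := by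
    by_contra h
    push_neg at h
    exact hψ (funext h)
  -- scalar equations from diagonal special unitaries
  have hD : ∀ (j : Fin d), i ≠ j → ∀ (c c' : ℂ), Dmat i j c c' ∈ SU d → ∀ m : Fin d,
      (if m = i then c else if m = j then c' else 1) * φ m
        = φ m + (c * ψ i - ψ i) * U m i + (c' * ψ j - ψ j) * U m j := by
    intro j hij c c' hmem m
    have h := base _ hmem
    rw [Dmat, diagonal_transpose, ← Dmat] at h
    have hDv : Dmat i j c c' *ᵥ ψ
        = fun m => if m = i then c * ψ i else if m = j then c' * ψ j else ψ m := by
      funext m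
      rw [Dmat, mulVec_diagonal]
      simp only [Dvec]
      split_ifs with h1 h2 <;> simp_all
    rw [hDv] at h
    have h2 := congrFun h m
    rw [mulVec_ite hij] at h2
    rw [Dmat, mulVec_diagonal] at h2
    simp only [Dvec] at h2
    convert h2 using 2
  -- scalar equations from "swap-type" special unitaries
  have hS : ∀ (j : Fin d), i ≠ j → ∀ (a b : ℂ), Smat i j a b ∈ SU d → ∀ m : Fin d,
      (if m = i then a * φ j else if m = j then b * φ i else φ m)
        = φ m + (b * ψ j - ψ i) * U m i + (a * ψ i - ψ j) * U m j := by
    intro j hij a b hmem m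
    have h := base _ hmem
    rw [Smat_transpose hij, Smat_mulVec hij, Smat_mulVec hij] at h
    have h2 := congrFun h m
    rw [mulVec_ite hij] at h2
    convert h2 using 2
  have hI1 : (Complex.I + 1) ≠ 0 := by
    intro h
    have := congrArg Complex.im h
    simp at this
  have key : ∀ k, k ≠ i → ∀ l, U k l = 0 := by
    intro k hk
    have hik : i ≠ k := Ne.symm hk
    have mem1 : Dmat i k Complex.I (-Complex.I) ∈ SU d :=
      Dmat_mem_SU hik _ _ (by simp) (by simp) (by simp)
    have mem2 : Dmat i k (-Complex.I) Complex.I ∈ SU d :=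
      Dmat_mem_SU hik _ _ (by simp) (by simp) (by simp)
    have mem3 : Smat i k 1 (-1) ∈ SU d :=
      Smat_mem_SU hik _ _ (by simp) (by simp) (by ring)
    have mem4 : Smat i k Complex.I Complex.I ∈ SU d :=
      Smat_mem_SU hik _ _ (by simp) (by simp) (by simp)
    have e1 := hD k hik Complex.I (-Complex.I) mem1 k
    have e2 := hD k hik (-Complex.I) Complex.I mem2 k
    have e3 := hS k hik 1 (-1) mem3 k
    have e4 := hS k hik Complex.I Complex.I mem4 k
    rw [if_neg hk, if_pos rfl] at e1 e2 e3 e4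
    have hA : φ k = ψ i * U k i + ψ k * U k k := by
      linear_combination (-(1:ℂ)/2) * e1 - (1/2 : ℂ) * e2
    have hBmul : Complex.I * (φ k + ψ i * U k i - ψ k * U k k) = 0 := by
      linear_combination (-(1:ℂ)/2) * e1 + (1/2 : ℂ) * e2
    have hB : φ k + ψ i * U k i - ψ k * U k k = 0 :=
      (mul_eq_zero.mp hBmul).resolve_left Complex.I_ne_zero
    have hXki : ψ i * U k i = 0 := by
      linear_combination ((1:ℂ)/2) * hB - (1/2 : ℂ) * hA
    have hUki : U k i = 0 := (mul_eq_zero.mp hXki).resolve_left hψi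
    have hfk : φ k = ψ k * U k k := by
      linear_combination hA + ψ i * hUki
    have hC : φ i + ψ i * U k k = 0 := by
      linear_combination (-1 : ℂ) * e3 - hfk + (ψ k + ψ i) * hUki
    have hD4 : Complex.I * (φ i - ψ i * U k k) = 0 := by
      linear_combination e4 + hfk + (Complex.I * ψ k - ψ i) * hUki
    have hC' : φ i - ψ i * U k k = 0 :=
      (mul_eq_zero.mp hD4).resolve_left Complex.I_ne_zero
    have hXkk : ψ i * U k k = 0 := by
      linear_combination ((1:ℂ)/2) * hC - (1/2 : ℂ) * hC'
    have hUkk : U k k = 0 := (mul_eq_zero.mp hXkk).resolve_left hψi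
    intro l
    rcases eq_or_ne l i with rfl | hli
    · exact hUki
    rcases eq_or_ne l k with rfl | hlk
    · exact hUkk
    have hil : i ≠ l := Ne.symm hli
    have mem1' : Dmat i l Complex.I (-Complex.I) ∈ SU d :=
      Dmat_mem_SU hil _ _ (by simp) (by simp) (by simp)
    have mem3' : Smat i l 1 (-1) ∈ SU d :=
      Smat_mem_SU hil _ _ (by simp) (by simp) (by ring)
    have f1 := hD l hil Complex.I (-Complex.I) mem1' k
    have f3 := hS l hil 1 (-1) mem3' k
    rw [if_neg hk, if_neg (Ne.symm hlk)] at f1 f3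
    have hY : (Complex.I + 1) * (ψ l * U k l) = 0 := by
      linear_combination f1 + (Complex.I * ψ i - ψ i) * hUki
    have hY' : ψ l * U k l = 0 := (mul_eq_zero.mp hY).resolve_left hI1
    have hZ : ψ i * U k l = 0 := by
      linear_combination (-1 : ℂ) * f3 + (ψ l + ψ i) * hUki + hY'
    exact (mul_eq_zero.mp hZ).resolve_left hψi
  obtain ⟨k, hk⟩ : ∃ k : Fin d, k ≠ i := by
    haveI : Nontrivial (Fin d) :=
      ⟨⟨⟨0, by omega⟩, ⟨1, by omega⟩, by simp [Fin.ext_iff]⟩⟩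
    exact exists_ne i
  have hdet0 : U.det = 0 := Matrix.det_eq_zero_of_row_eq_zero k (key k hk)
  rw [hUdet] at hdet0
  exact one_ne_zero hdet0
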